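/- Let X be a locally compact Hausdorff totally disconnected topological space, let Z ⊆ X be a closed subset equipped with the subspace topology, and let R be a commutative ring. For every locally constant function f : Z → R with compact support there exists a locally constant function g : X → R with compact support such that g(z) = f(z) for all z ∈ Z. In other words, the restriction map C_c^∞(X,R) → C_c^∞(Z,R) is surjective. -/

import Mathlib

/-- In a locally compact Hausdorff totally disconnected space, every point of an open set
has a compact clopen neighbourhood inside the open set. -/
lemma aux_clopen_compact {X : Type*} [TopologicalSpace X] [LocallyCompactSpace X] [T2Space X]
    [TotallyDisconnectedSpace X] {x : X} {V : Set X} (hV : IsOpen V) (hx : x ∈ V) :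
    ∃ U : Set X, IsClopen U ∧ IsCompact U ∧ x ∈ U ∧ U ⊆ V := by
  obtain ⟨K, hK, hxK, hKV⟩ := exists_compact_subset hV hx
  obtain ⟨U, hU, hxU, hUK⟩ :=
    loc_compact_Haus_tot_disc_of_zero_dim.mem_nhds_iff.1 (isOpen_interior.mem_nhds hxK)
  exact ⟨U, hU, hK.of_isClosed_subset hU.1 (hUK.trans interior_subset),
    hxU, (hUK.trans interior_subset).trans hKV⟩

/-- A compact subset of a closed set `Z` which is open in the subspace topology of `Z`
is the trace on `Z` of a compact clopen subset of the ambient space. -/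
lemma aux_extend_compact_open {X : Type*} [TopologicalSpace X] [LocallyCompactSpace X]
    [T2Space X] [TotallyDisconnectedSpace X] {Z A V : Set X}
    (hA : IsCompact A) (hAZ : A ⊆ Z) (hV : IsOpen V) (hAV : A = V ∩ Z) :
    ∃ B : Set X, IsClopen B ∧ IsCompact B ∧ B ∩ Z = A := by
  have hcov : ∀ a : A, ∃ U : Set X, IsClopen U ∧ IsCompact U ∧ (a : X) ∈ U ∧ U ⊆ V := by
    intro a
    have ha : (a : X) ∈ V ∩ Z := by rw [← hAV]; exact a.2
    exact aux_clopen_compact hV ha.1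
  choose U hUclo hUcpt hUmem hUV using hcov
  have : A ⊆ ⋃ a : A, U a := fun x hx => Set.mem_iUnion.2 ⟨⟨x, hx⟩, hUmem ⟨x, hx⟩⟩
  obtain ⟨t, ht⟩ := hA.elim_finite_subcover U (fun a => (hUclo a).2) this
  refine ⟨⋃ a ∈ t, U a, ?_, ?_, ?_⟩
  · exact Set.Finite.isClopen_biUnion t.finite_toSet fun a _ => hUclo a
  · exact t.isCompact_biUnion fun a _ => hUcpt a
  · apply Set.Subset.antisymm
    · rintro x ⟨hxU, hxZ⟩
      obtain ⟨a, -, hxa⟩ := Set.mem_iUnion₂.1 hxU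
      rw [hAV]
      exact ⟨hUV a hxa, hxZ⟩
    · exact Set.subset_inter ht hAZ

/-- Let `X` be a locally compact Hausdorff totally disconnected space,
`Z ⊆ X` a closed subset (with the subspace topology) and `R` a commutative ring. Every
locally constant compactly supported function `f : Z → R` extends to a locally constant
compactly supported function `g : X → R`; i.e. the restriction map
`C_c^∞(X,R) → C_c^∞(Z,R)` is surjective. -/
theorem stmt2 {X : Type*} [TopologicalSpace X] [LocallyCompactSpace X] [T2Space X]
    [TotallyDisconnectedSpace X] (Z : Set X) (hZ : IsClosed Z)
    (R : Type*) [CommRing R]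
    (f : Z → R) (hf : IsLocallyConstant f) (hfc : HasCompactSupport f) :
    ∃ g : X → R, IsLocallyConstant g ∧ HasCompactSupport g ∧ ∀ z : Z, g z = f z := by
  classical
  -- the values of `f` on its (compact) support form a finite set
  have hcover : tsupport f ⊆ ⋃ c : R, f ⁻¹' {c} := fun z _ => Set.mem_iUnion.2 ⟨f z, rfl⟩
  obtain ⟨s₀, hs₀⟩ := hfc.elim_finite_subcover (fun c : R => f ⁻¹' {c})
    (fun c => hf.isOpen_fiber c) hcover
  set s : Finset R := s₀.erase 0 with hs
  -- for each nonzero value `c`, extend the fiber `f ⁻¹' {c}` to a compact clopen set in `X`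
  have hfiber : ∀ c : R, c ∈ s →
      ∃ B : Set X, IsClopen B ∧ IsCompact B ∧ B ∩ Z = Subtype.val '' (f ⁻¹' {c}) := by
    intro c hc
    have hc0 : c ≠ 0 := Finset.ne_of_mem_erase hc
    -- the fiber is compact
    have hsub : f ⁻¹' {c} ⊆ tsupport f := fun z hz => by
      apply subset_tsupport
      simp only [Function.mem_support]
      rw [Set.mem_preimage, Set.mem_singleton_iff] at hz
      rw [hz]; exact hc0
    have hfib_cpt : IsCompact (f ⁻¹' {c}) :=
      hfc.of_isClosed_subset (hf.isClosed_fiber c) hsub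
    have hA_cpt : IsCompact (Subtype.val '' (f ⁻¹' {c})) :=
      hfib_cpt.image continuous_subtype_val
    -- the fiber is the trace of an open subset of `X`
    obtain ⟨V, hV, hVfib⟩ := isOpen_induced_iff.1 (hf.isOpen_fiber c)
    have himg : Subtype.val '' (f ⁻¹' {c}) = V ∩ Z := by
      have hpre : f ⁻¹' {c} = Subtype.val ⁻¹' V := by rw [hVfib]; rfl
      rw [hpre, Subtype.image_preimage_coe, Set.inter_comm]
    exact aux_extend_compact_open hA_cpt
      (by rintro x ⟨z, -, rfl⟩; exact z.2) hV himg
  -- choose the extensions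
  have hfiber' : ∀ c : R, ∃ B : Set X, IsClopen B ∧ IsCompact B ∧
      (c ∈ s → B ∩ Z = Subtype.val '' (f ⁻¹' {c})) := by
    intro c
    by_cases hc : c ∈ s
    · obtain ⟨B, h1, h2, h3⟩ := hfiber c hc
      exact ⟨B, h1, h2, fun _ => h3⟩
    · exact ⟨∅, isClopen_empty, isCompact_empty, fun h => absurd h hc⟩
  choose B hBclo hBcpt hBZ using hfiber'
  -- define the extension
  refine ⟨fun x => ∑ c ∈ s, if x ∈ B c then c else 0, ?_, ?_, ?_⟩
  · -- locally constant
    have hind : ∀ c : R, IsLocallyConstant (fun x => if x ∈ B c then c else 0) := by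
      intro c t
      have : (fun x => if x ∈ B c then c else 0) ⁻¹' t =
          if c ∈ t then (if (0 : R) ∈ t then Set.univ else B c)
          else (if (0 : R) ∈ t then (B c)ᶜ else ∅) := by
        ext x
        by_cases hx : x ∈ B c <;> split_ifs with h1 h2 <;>
          simp_all [Set.mem_preimage]
      rw [this]
      split_ifs
      exacts [isOpen_univ, (hBclo c).2, (hBclo c).1.isOpen_compl, isOpen_empty]
    have : ∀ t : Finset R, IsLocallyConstant (fun x => ∑ c ∈ t, if x ∈ B c then c else 0) := by
      intro t
      induction t using Finset.induction with
      | empty => simp only [Finset.sum_empty]; exact IsLocallyConstant.const (0 : R)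
      | insert _ _ h ih =>
        simp only [Finset.sum_insert h]
        exact (hind _).add ih
    exact this s
  · -- compact support
    apply HasCompactSupport.intro (K := ⋃ c ∈ s, B c)
      (s.isCompact_biUnion fun c _ => hBcpt c)
    intro x hx
    apply Finset.sum_eq_zero
    intro c hc
    rw [if_neg]
    intro hxB
    exact hx (Set.mem_biUnion hc hxB)
  · -- extension property
    intro z
    have hmem : ∀ c ∈ s, ((z : X) ∈ B c ↔ f z = c) := by
      intro c hc
      constructor
      · intro hzB
        have : (z : X) ∈ B c ∩ Z := ⟨hzB, z.2⟩
        rw [hBZ c hc] at this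
        obtain ⟨w, hw, hwz⟩ := this
        rw [Set.mem_preimage, Set.mem_singleton_iff] at hw
        rwa [← Subtype.coe_injective hwz]
      · intro hfz
        have : (z : X) ∈ Subtype.val '' (f ⁻¹' {c}) := ⟨z, by simp [hfz], rfl⟩
        rw [← hBZ c hc] at this
        exact this.1
    have : (∑ c ∈ s, if (z : X) ∈ B c then c else 0) = ∑ c ∈ s, if f z = c then c else 0 := by
      apply Finset.sum_congr rfl
      intro c hc
      simp [hmem c hc]
    show (∑ c ∈ s, if (z : X) ∈ B c then c else 0) = f z
    rw [this]
    rw [Finset.sum_ite_eq s (f z) (fun c => c)]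
    split_ifs with h
    · rfl
    · -- `f z ∉ s`, so `f z = 0`
      by_contra hne
      have hfz0 : f z ≠ 0 := fun h0 => hne (by rw [h0])
      have hzsupp : z ∈ tsupport f := subset_tsupport f hfz0
      have := hs₀ hzsupp
      obtain ⟨c, hc, hzc⟩ := Set.mem_iUnion₂.1 this
      rw [Set.mem_preimage, Set.mem_singleton_iff] at hzc
      exact h (Finset.mem_erase.2 ⟨hzc ▸ hfz0, hzc ▸ hc⟩)
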